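/- Let h(x) = max_{i ∈ [m]} (b_i + ⟨c_i, x⟩) be a tropical polynomial on ℝⁿ with pairwise distinct points (b_i, c_i) ∈ ℝ^{1+n}, and let N(h) = conv{(b_i, c_i) : i ∈ [m]}. Then for each index i, there exists x ∈ ℝⁿ such that b_i + ⟨c_i, x⟩ > b_j + ⟨c_j, x⟩ for all j ≠ i (i.e., term i defines a linear region of h) if and only if (b_i, c_i) is a vertex of N(h) lying on the upper hull N^max(h). In particular, the linear regions of h are in bijection with the vertices on the upper hull of its Newton polytope. -/

import Mathlib

open scoped RealInnerProductSpace

/-- The upper hull of a set `P ⊆ ℝ^{1+n}` (coordinates written `(λ, x)`):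
`P^max = {(λ, x) ∈ P : (t, x) ∈ P ⇒ t ≤ λ}`. -/
def upperHull {n : ℕ} (P : Set (ℝ × EuclideanSpace ℝ (Fin n))) :
    Set (ℝ × EuclideanSpace ℝ (Fin n)) :=
  {p ∈ P | ∀ t : ℝ, (t, p.2) ∈ P → t ≤ p.1}

/-- If a linear functional is maximized strictly at `f i` among the generators,
then every point of the convex hull achieving the maximum equals `f i`. -/
lemma max_unique {V : Type*} [AddCommGroup V] [Module ℝ V]
    (φ : V →ₗ[ℝ] ℝ) {m : ℕ} (f : Fin m → V) (i : Fin m)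
    (hlt : ∀ j : Fin m, f j ≠ f i → φ (f j) < φ (f i)) :
    ∀ q ∈ convexHull ℝ (Set.range f), φ q = φ (f i) → q = f i := by
  intro q hq hqM
  rw [mem_convexHull_iff_exists_fintype] at hq
  obtain ⟨ι, _, w, z, hw0, hw1, hz, hx⟩ := hq
  have hzle : ∀ k, φ (z k) ≤ φ (f i) := by
    intro k
    obtain ⟨j, hj⟩ := hz k
    by_cases h : z k = f i
    · rw [h]
    · exact (hlt j (hj.symm ▸ h ∘ (hj ▸ ·))).le.trans_eq' (by rw [hj])
  have hφq : ∑ k, w k * φ (z k) = φ (f i) := by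
    rw [← hqM, ← hx, map_sum]
    simp [map_smul, smul_eq_mul]
  have hzero : ∀ k, w k * (φ (f i) - φ (z k)) = 0 := by
    have hsum : ∑ k, w k * (φ (f i) - φ (z k)) = 0 := by
      have h1 : ∑ k, w k * φ (f i) = φ (f i) := by
        rw [← Finset.sum_mul, hw1, one_mul]
      simp only [mul_sub]
      rw [Finset.sum_sub_distrib, h1, hφq, sub_self]
    intro k
    exact (Finset.sum_eq_zero_iff_of_nonneg (fun k _ =>
      mul_nonneg (hw0 k) (sub_nonneg.2 (hzle k)))).1 hsum k (Finset.mem_univ k)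
  have hterm : ∀ k, w k • z k = w k • f i := by
    intro k
    by_cases h : z k = f i
    · rw [h]
    · have hw : w k = 0 := by
        have h3 : φ (f i) - φ (z k) ≠ 0 := by
          obtain ⟨j, hj⟩ := hz k
          have := hlt j (by rw [hj]; exact h)
          rw [hj] at this; linarith
        exact (mul_eq_zero.1 (hzero k)).resolve_right h3
      rw [hw, zero_smul, zero_smul]
  rw [← hx, Finset.sum_congr rfl (fun k _ => hterm k), ← Finset.sum_smul, hw1, one_smul]

/-- A linear functional maximized at `f i` among the generators is at most
`φ (f i)` over the whole convex hull. -/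
lemma max_le_hull {V : Type*} [AddCommGroup V] [Module ℝ V]
    (φ : V →ₗ[ℝ] ℝ) {m : ℕ} (f : Fin m → V) (i : Fin m)
    (hle : ∀ j : Fin m, φ (f j) ≤ φ (f i)) :
    ∀ q ∈ convexHull ℝ (Set.range f), φ q ≤ φ (f i) := by
  intro q hq
  have hsub : Set.range f ⊆ {w | φ w ≤ φ (f i)} := by
    rintro _ ⟨j, rfl⟩; exact hle j
  exact convexHull_min hsub (convex_halfSpace_le φ.isLinear _) hq

lemma key_eq (a a' : ℝ) (ha : 0 < a) (ha' : 0 < a') (hab : a + a' = 1)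
    (y1 y2 M : ℝ) (k1 : y1 ≤ M) (k2 : y2 ≤ M) (ksum : a * y1 + a' * y2 = M) :
    y1 = M ∧ y2 = M := by
  have kM : a * M + a' * M = M := by rw [← add_mul, hab, one_mul]
  constructor
  · nlinarith [mul_le_mul_of_nonneg_left k2 ha'.le, mul_le_mul_of_nonneg_left k1 ha.le]
  · nlinarith [mul_le_mul_of_nonneg_left k2 ha'.le, mul_le_mul_of_nonneg_left k1 ha.le]

lemma key_div (α A B b1 b2 : ℝ) (hα : 0 < α) (h : b1 * α + A < b2 * α + B) :
    b1 + α⁻¹ * A < b2 + α⁻¹ * B := by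
  have hne : α ≠ 0 := hα.ne'
  have e1 : b1 + α⁻¹ * A = α⁻¹ * (b1 * α + A) := by field_simp
  have e2 : b2 + α⁻¹ * B = α⁻¹ * (b2 * α + B) := by field_simp
  rw [e1, e2]
  exact mul_lt_mul_of_pos_left h (inv_pos.2 hα)

theorem linear_regions_biject_upper_hull_vertices (n m : ℕ) (hm : 0 < m)
    (b : Fin m → ℝ) (c : Fin m → EuclideanSpace ℝ (Fin n))
    (hdist : Function.Injective
      (fun i => ((b i, c i) : ℝ × EuclideanSpace ℝ (Fin n))))
    (i : Fin m) :
    (∃ x : EuclideanSpace ℝ (Fin n), ∀ j : Fin m, j ≠ i →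
        b j + ⟪c j, x⟫ < b i + ⟪c i, x⟫) ↔
      ((b i, c i) ∈ Set.extremePoints ℝ (convexHull ℝ
          (Set.range fun l => ((b l, c l) : ℝ × EuclideanSpace ℝ (Fin n)))) ∧
        (b i, c i) ∈ upperHull (convexHull ℝ
          (Set.range fun l => ((b l, c l) : ℝ × EuclideanSpace ℝ (Fin n))))) := by
  classical
  set f : Fin m → ℝ × EuclideanSpace ℝ (Fin n) := fun l => (b l, c l) with hf
  set P : Set (ℝ × EuclideanSpace ℝ (Fin n)) := convexHull ℝ (Set.range f) with hP
  have hpP : f i ∈ P := subset_convexHull ℝ _ (Set.mem_range_self i)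
  constructor
  · rintro ⟨x, hx⟩
    set φ : (ℝ × EuclideanSpace ℝ (Fin n)) →ₗ[ℝ] ℝ :=
      LinearMap.fst ℝ ℝ (EuclideanSpace ℝ (Fin n)) +
        ((innerSL ℝ x).toLinearMap).comp (LinearMap.snd ℝ ℝ (EuclideanSpace ℝ (Fin n)))
      with hφ
    have hφval : ∀ q : ℝ × EuclideanSpace ℝ (Fin n), φ q = q.1 + ⟪x, q.2⟫ := by
      intro q; simp only [hφ, LinearMap.add_apply, LinearMap.coe_comp, Function.comp_apply,
        LinearMap.fst_apply, LinearMap.snd_apply, ContinuousLinearMap.coe_coe, innerSL_apply_apply]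
    have hltφ : ∀ j : Fin m, f j ≠ f i → φ (f j) < φ (f i) := by
      intro j hj
      have hji : j ≠ i := fun h => hj (by rw [h])
      have h0 := hx j hji
      rw [hφval, hφval]
      have e1 : ⟪x, (f j).2⟫ = ⟪c j, x⟫ := real_inner_comm _ _
      have e2 : ⟪x, (f i).2⟫ = ⟪c i, x⟫ := real_inner_comm _ _
      rw [e1, e2]
      exact h0
    have hleφ : ∀ j : Fin m, φ (f j) ≤ φ (f i) := by
      intro j
      by_cases h : f j = f i
      · rw [h]
      · exact (hltφ j h).le
    have hmax := max_le_hull φ f i hleφ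
    have huniq := max_unique φ f i hltφ
    refine ⟨?_, hpP, ?_⟩
    · rw [mem_extremePoints]
      refine ⟨hpP, fun x₁ hx₁ x₂ hx₂ hseg => ?_⟩
      obtain ⟨a, a', ha, ha', hab, heq⟩ := hseg
      have h1 : φ x₁ ≤ φ (f i) := hmax x₁ hx₁
      have h2 : φ x₂ ≤ φ (f i) := hmax x₂ hx₂
      have hsum : a * φ x₁ + a' * φ x₂ = φ (f i) := by
        have := congrArg φ heq
        simpa [map_add, map_smul, smul_eq_mul] using this
      obtain ⟨he1, he2⟩ := key_eq a a' ha ha' hab _ _ _ h1 h2 hsum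
      exact ⟨huniq x₁ hx₁ he1, huniq x₂ hx₂ he2⟩
    · intro t ht
      have h3 := hmax (t, c i) ht
      rw [hφval, hφval] at h3
      simpa [hf] using h3
  · rintro ⟨hext, hupP⟩
    set e0 : ℝ × EuclideanSpace ℝ (Fin n) := ((1 : ℝ), (0 : EuclideanSpace ℝ (Fin n))) with he0
    set T : Set (ℝ × EuclideanSpace ℝ (Fin n)) := f '' {j | j ≠ i} with hT
    have hTP : T ⊆ P \ {f i} := by
      rintro _ ⟨j, hj, rfl⟩
      refine ⟨subset_convexHull ℝ _ (Set.mem_range_self j), ?_⟩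
      simp only [Set.mem_singleton_iff]
      exact fun h => hj (hdist h)
    have hconvdiff : Convex ℝ (P \ {f i}) :=
      ((convex_convexHull ℝ _).mem_extremePoints_iff_convex_diff.1 hext).2
    have hTPc : convexHull ℝ T ⊆ P \ {f i} := convexHull_min hTP hconvdiff
    set K : Set (ℝ × EuclideanSpace ℝ (Fin n)) := convexHull ℝ (insert (f i - e0) T) with hK
    have he00 : e0 ≠ 0 := by
      intro h
      have : (1 : ℝ) = 0 := congrArg Prod.fst h
      exact one_ne_zero this
    have hpK : f i ∉ K := by
      intro hmem
      by_cases hTne : T.Nonempty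
      · rw [hK, convexHull_insert hTne, mem_convexJoin] at hmem
        obtain ⟨p', hp', q, hq, hseg⟩ := hmem
        rw [Set.mem_singleton_iff] at hp'
        subst hp'
        obtain ⟨a, a', ha, ha', hab, heq⟩ := hseg
        by_cases ha'0 : a' = 0
        · rw [ha'0, zero_smul, add_zero] at heq
          have ha1 : a = 1 := by rw [ha'0, add_zero] at hab; exact hab
          rw [ha1, one_smul] at heq
          exact he00 (sub_eq_self.1 heq)
        · have ha'pos : 0 < a' := lt_of_le_of_ne ha' (Ne.symm ha'0)
          have h2 := congrArg Prod.snd heq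
          simp only [Prod.snd_add, Prod.smul_snd, Prod.snd_sub] at h2
          -- h2 : a • ((f i).2 - e0.2) + a' • q.2 = (f i).2
          have h2' : a • ((c i) - 0) + a' • q.2 = c i := h2
          have hq2 : a' • q.2 = a' • (c i) := by
            have ha1 : a = 1 - a' := by linarith
            rw [ha1] at h2'
            linear_combination (norm := module) h2'
          have h2nd : q.2 = c i :=
            smul_right_injective (EuclideanSpace ℝ (Fin n)) ha'0 hq2
          have h1st : a * (b i - 1) + a' * q.1 = b i := by
            have h1 := congrArg Prod.fst heq
            simpa [he0] using h1
          have hqP : q ∈ P \ {f i} := hTPc hq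
          have hqc : (q.1, c i) ∈ P := by
            rw [← h2nd]
            exact hqP.1
          have hqle : q.1 ≤ b i := hupP.2 q.1 hqc
          have hbM : a * b i + a' * b i = b i := by rw [← add_mul, hab, one_mul]
          have ha0 : a = 0 := by
            nlinarith [mul_le_mul_of_nonneg_left hqle ha'pos.le, hbM]
          have hq_eq : q = f i := by
            rw [ha0, zero_smul, zero_add] at heq
            rw [ha0, zero_add] at hab
            rw [hab, one_smul] at heq
            exact heq
          exact hqP.2 hq_eq
      · have hTe : T = ∅ := Set.not_nonempty_iff_eq_empty.1 hTne
        have hsingle : insert (f i - e0) T = {f i - e0} := by rw [hTe]; simp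
        rw [hK, hsingle, convexHull_singleton, Set.mem_singleton_iff] at hmem
        exact he00 (sub_eq_self.1 hmem.symm)
    have hKfin : (insert (f i - e0) T).Finite :=
      (Set.Finite.image f (Set.toFinite _)).insert _
    have hKcpt : IsCompact K := hKfin.isCompact_convexHull ℝ
    obtain ⟨ψ, u, hsep1, hsep2⟩ :=
      geometric_hahn_banach_closed_point (convex_convexHull ℝ _) hKcpt.isClosed hpK
    set α : ℝ := ψ e0 with hα
    have hαpos : 0 < α := by
      have h1 : ψ (f i - e0) < u := hsep1 _ (subset_convexHull ℝ _ (Set.mem_insert _ _))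
      have h2 : ψ (f i) - ψ e0 < u := by rw [← map_sub]; exact h1
      linarith
    set g : EuclideanSpace ℝ (Fin n) →L[ℝ] ℝ :=
      ψ.comp (ContinuousLinearMap.inr ℝ ℝ (EuclideanSpace ℝ (Fin n))) with hg
    set v : EuclideanSpace ℝ (Fin n) :=
      (InnerProductSpace.toDual ℝ (EuclideanSpace ℝ (Fin n))).symm g with hv
    have hinner : ∀ y : EuclideanSpace ℝ (Fin n), ⟪v, y⟫ = ψ (0, y) := by
      intro y
      rw [hv, InnerProductSpace.toDual_symm_apply]
      rfl
    have hψval : ∀ q : ℝ × EuclideanSpace ℝ (Fin n), ψ q = q.1 * α + ⟪v, q.2⟫ := by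
      intro q
      have hdecomp : q = q.1 • e0 + ((0 : ℝ), q.2) := by
        have h1 : (q.1 • e0 + ((0 : ℝ), q.2)).1 = q.1 := by simp [he0]
        have h2 : (q.1 • e0 + ((0 : ℝ), q.2)).2 = q.2 := by simp [he0]
        exact Prod.ext h1.symm h2.symm
      rw [hinner]
      conv_lhs => rw [hdecomp]
      rw [map_add, map_smul]
      simp [hα, smul_eq_mul, mul_comm]
    refine ⟨α⁻¹ • v, fun j hj => ?_⟩
    have hjK : f j ∈ K := subset_convexHull ℝ _ (Set.mem_insert_of_mem _ ⟨j, hj, rfl⟩)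
    have hlt : ψ (f j) < ψ (f i) := lt_trans (hsep1 _ hjK) hsep2
    rw [hψval, hψval] at hlt
    have hlt2 : b j * α + ⟪v, c j⟫ < b i * α + ⟪v, c i⟫ := hlt
    have hj1 : ⟪c j, α⁻¹ • v⟫ = α⁻¹ * ⟪v, c j⟫ := by
      rw [real_inner_smul_right, real_inner_comm]
    have hj2 : ⟪c i, α⁻¹ • v⟫ = α⁻¹ * ⟪v, c i⟫ := by
      rw [real_inner_smul_right, real_inner_comm]
    rw [hj1, hj2]
    exact key_div α _ _ _ _ hαpos hlt2
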